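/- If a family A of subsets of [n] is a strong k-wise eventown (k ≥ 2) but not a (k+1)-wise eventown, then n ≥ 2^(k+1) − 1. -/

import Mathlib

private lemma odd_cast_zmod2 (m : ℕ) (h : Odd m) : (m : ZMod 2) = 1 := by
  obtain ⟨c, rfl⟩ := h; push_cast; rw [show (2 : ZMod 2) = 0 from rfl]; ring

private lemma even_cast_zmod2 (m : ℕ) (h : Even m) : (m : ZMod 2) = 0 := by
  obtain ⟨c, rfl⟩ := h
  push_cast
  rw [show ((c : ZMod 2) + c) = 2 * c from by ring, show (2 : ZMod 2) = 0 from rfl]; ring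

/-- A strong k-wise eventown that is not a (k+1)-wise eventown requires n ≥ 2^(k+1) - 1. -/
theorem strong_kwise_not_succ_universe (n k : ℕ) (hk : 2 ≤ k) (𝒜 : Finset (Finset (Fin n)))
    (hstrong : ∀ k', 1 ≤ k' → k' ≤ k → ∀ S : Finset (Finset (Fin n)), S ⊆ 𝒜 →
      S.card = k' → Even (S.inf id).card)
    (hnot : ∃ S : Finset (Finset (Fin n)), S ⊆ 𝒜 ∧ S.card = k + 1 ∧ Odd (S.inf id).card) :
    2 ^ (k + 1) - 1 ≤ n := by
  classical
  obtain ⟨S, hS𝒜, hScard, hSodd⟩ := hnot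
  set φ : Fin n → Finset (Finset (Fin n)) := fun x => S.filter (fun A => x ∈ A) with hφ
  set fib : Finset (Finset (Fin n)) → Finset (Fin n) :=
    fun T => Finset.univ.filter (fun x => φ x = T) with hfib
  -- atoms partition each intersection
  have h1 : ∀ T ∈ S.powerset, (T.inf id).card = ∑ T' ∈ Finset.Icc T S, (fib T').card := by
    intro T hT
    rw [Finset.mem_powerset] at hT
    rw [Finset.card_eq_sum_card_fiberwise (f := φ) (t := Finset.Icc T S)
      (fun x hx => by
        rw [Finset.mem_coe, Finset.mem_Icc]
        refine ⟨fun A hA => ?_, Finset.filter_subset _ _⟩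
        simp only [hφ, Finset.mem_filter]
        exact ⟨hT hA, Finset.mem_inf.mp hx A hA⟩)]
    refine Finset.sum_congr rfl fun T' hT' => ?_
    rw [Finset.mem_Icc] at hT'
    congr 1
    ext x
    simp only [hfib, Finset.mem_filter, Finset.mem_univ, true_and, and_iff_right_iff_imp]
    intro hx
    rw [Finset.mem_inf]
    intro A hA
    have : A ∈ φ x := hx ▸ hT'.1 hA
    simp only [hφ, Finset.mem_filter] at this
    exact this.2
  -- mod 2 Möbius inversion
  have h2 : ∀ T ∈ S.powerset,
      ((fib T).card : ZMod 2) = ∑ T' ∈ Finset.Icc T S, ((T'.inf id).card : ZMod 2) := by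
    intro T hT
    rw [Finset.mem_powerset] at hT
    have collapse : ∀ T'' : Finset (Finset (Fin n)), T ⊆ T'' →
        ∑ T' ∈ Finset.Icc T S, (if T' ⊆ T'' then ((fib T'').card : ZMod 2) else 0)
          = ((2 : ZMod 2)) ^ (T''.card - T.card) * ((fib T'').card : ZMod 2) := by
      intro T'' hTT''
      rw [Finset.sum_ite, Finset.sum_const_zero, add_zero, Finset.sum_const]
      have hfilter : Finset.filter (fun T' => T' ⊆ T'') (Finset.Icc T S)
          = Finset.Icc T S ∩ Finset.Icc T T'' := by
        ext T'
        simp only [Finset.mem_filter, Finset.mem_inter, Finset.mem_Icc]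
        exact ⟨fun ⟨⟨ha, hb⟩, hc⟩ => ⟨⟨ha, hb⟩, ha, hc⟩, fun ⟨⟨ha, hb⟩, _, hc⟩ => ⟨⟨ha, hb⟩, hc⟩⟩
      rw [hfilter, nsmul_eq_mul]
      by_cases hsub : T'' ⊆ S
      · have : Finset.Icc T S ∩ Finset.Icc T T'' = Finset.Icc T T'' := by
          apply Finset.inter_eq_right.mpr
          intro T' hT'
          rw [Finset.mem_Icc] at hT' ⊢
          exact ⟨hT'.1, hT'.2.trans hsub⟩
        rw [this, Finset.card_Icc_finset hTT'']
        push_cast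
        ring
      · -- if T'' ⊄ S then fib T'' = ∅
        have : fib T'' = ∅ := by
          rw [Finset.eq_empty_iff_forall_notMem]
          intro x hx
          simp only [hfib, Finset.mem_filter, Finset.mem_univ, true_and] at hx
          exact hsub (hx ▸ Finset.filter_subset _ _)
        rw [this]
        simp
    have step : ∑ T' ∈ Finset.Icc T S, ((T'.inf id).card : ZMod 2)
        = ∑ T' ∈ Finset.Icc T S, ∑ T'' ∈ Finset.Icc T S,
            (if T' ⊆ T'' then ((fib T'').card : ZMod 2) else 0) := by
      refine Finset.sum_congr rfl fun T' hT' => ?_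
      rw [Finset.mem_Icc] at hT'
      have e1 : ((T'.inf id).card : ZMod 2)
          = ∑ T'' ∈ Finset.Icc T' S, ((fib T'').card : ZMod 2) := by
        rw [h1 T' (Finset.mem_powerset.mpr hT'.2)]; push_cast; rfl
      rw [e1, Finset.sum_ite, Finset.sum_const_zero, add_zero]
      congr 1
      ext T''
      simp only [Finset.mem_filter, Finset.mem_Icc]
      constructor
      · rintro ⟨ha, hb⟩; exact ⟨⟨hT'.1.trans ha, hb⟩, ha⟩
      · rintro ⟨⟨_, hb⟩, hc⟩; exact ⟨hc, hb⟩
    rw [step, Finset.sum_comm,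
      Finset.sum_eq_single_of_mem T (Finset.mem_Icc.mpr ⟨subset_rfl, hT⟩)
        (fun T'' hT'' hne => by
          rw [Finset.mem_Icc] at hT''
          rw [collapse T'' hT''.1]
          have hlt : T.card < T''.card :=
            Finset.card_lt_card (ssubset_of_subset_of_ne hT''.1 (Ne.symm hne))
          have : T''.card - T.card = (T''.card - T.card - 1) + 1 := by omega
          rw [this, pow_succ, show (2 : ZMod 2) = 0 from rfl]
          ring)]
    rw [collapse T subset_rfl, Nat.sub_self, pow_zero, one_mul]
  -- every atom indexed by a nonempty subset of S is odd, hence nonempty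
  have h3 : ∀ T ∈ S.powerset.erase ∅, (fib T).Nonempty := by
    intro T hT
    rw [Finset.mem_erase, Finset.mem_powerset] at hT
    have hcast : ((fib T).card : ZMod 2) = 1 := by
      rw [h2 T (Finset.mem_powerset.mpr hT.2)]
      rw [Finset.sum_eq_single_of_mem S (Finset.mem_Icc.mpr ⟨hT.2, subset_rfl⟩)
        (fun T' hT' hne => by
          rw [Finset.mem_Icc] at hT'
          apply even_cast_zmod2
          have hne' : T'.Nonempty := by
            rcases Finset.nonempty_iff_ne_empty.mpr hT.1 with h
            exact (Finset.nonempty_iff_ne_empty.mpr hT.1).mono hT'.1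
          have hle : T'.card ≤ k := by
            have := Finset.card_lt_card (ssubset_of_subset_of_ne hT'.2 hne)
            omega
          exact hstrong T'.card (Finset.card_pos.mpr hne') hle T' (hT'.2.trans hS𝒜) rfl)]
      exact odd_cast_zmod2 _ hSodd
    rw [Finset.nonempty_iff_ne_empty]
    intro hempty
    rw [hempty] at hcast
    simp at hcast
  -- atoms are pairwise disjoint, count them
  have hdisj : ∀ T ∈ S.powerset.erase ∅, ∀ T' ∈ S.powerset.erase ∅, T ≠ T' →
      Disjoint (fib T) (fib T') := by
    intro T _ T' _ hne
    rw [Finset.disjoint_left]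
    intro x hx hx'
    simp only [hfib, Finset.mem_filter, Finset.mem_univ, true_and] at hx hx'
    exact hne (hx ▸ hx')
  have hcount : ((S.powerset.erase ∅).biUnion fib).card
      = ∑ T ∈ S.powerset.erase ∅, (fib T).card := Finset.card_biUnion hdisj
  have hge : (S.powerset.erase ∅).card ≤ ∑ T ∈ S.powerset.erase ∅, (fib T).card := by
    calc (S.powerset.erase ∅).card = ∑ T ∈ S.powerset.erase ∅, 1 := by
          rw [Finset.sum_const, smul_eq_mul, mul_one]
      _ ≤ ∑ T ∈ S.powerset.erase ∅, (fib T).card :=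
          Finset.sum_le_sum fun T hT => Finset.card_pos.mpr (h3 T hT)
  have hcard : (S.powerset.erase ∅).card = 2 ^ (k + 1) - 1 := by
    rw [Finset.card_erase_of_mem (Finset.empty_mem_powerset S), Finset.card_powerset, hScard]
  have hfin : ((S.powerset.erase ∅).biUnion fib).card ≤ n := by
    calc ((S.powerset.erase ∅).biUnion fib).card ≤ (Finset.univ : Finset (Fin n)).card :=
          Finset.card_le_card (Finset.subset_univ _)
      _ = n := by simp
  omega
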